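/- If m is a strictly positive exhaustive submeasure on a Boolean algebra B, then the set I of all sequences {a_n} with lim_n m(a_n) = 0 is a convergence ideal, and the induced sequential topology is uniformly Fréchet, witnessed by choice functions F_k selecting from each sequence in I an element of submeasure < 1/k. -/
import Mathlib


open Filter Topology

variable {α : Type*}

/-- A convergence ideal on a Boolean algebra: a set of infinite sequences
(i) with no nonzero common lower bound, (ii) closed under subsequences,
(iii) closed under minorization, (iv) closed under pairwise joins, and
(v) containing every infinite antichain (sequence of pairwise disjoint nonzero elements). -/
def IsConvIdeal [BooleanAlgebra α] (I : Set (ℕ → α)) : Prop :=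
  (∀ a ∈ I, ∀ b : α, (∀ n, b ≤ a n) → b = ⊥) ∧
  (∀ a ∈ I, ∀ φ : ℕ → ℕ, StrictMono φ → (fun n => a (φ n)) ∈ I) ∧
  (∀ a ∈ I, ∀ b : ℕ → α, (∀ n, b n ≤ a n) → b ∈ I) ∧
  (∀ a ∈ I, ∀ b ∈ I, (fun n => a n ⊔ b n) ∈ I) ∧
  (∀ a : ℕ → α, (∀ n, a n ≠ ⊥) → (∀ i j, i ≠ j → a i ⊓ a j = ⊥) → a ∈ I)

/-- `ConvTo I a c` : the sequence `a` converges to `c`, i.e. `{a n ∆ c} ∈ I`. -/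
def ConvTo [BooleanAlgebra α] (I : Set (ℕ → α)) (a : ℕ → α) (c : α) : Prop :=
  (fun n => symmDiff (a n) c) ∈ I

/-- `F k` picks a term of its argument sequence. -/
def IsSelective [BooleanAlgebra α] (F : ℕ → (ℕ → α) → α) : Prop :=
  ∀ k, ∀ x : ℕ → α, ∃ n, F k x = x n

/-- Uniform Fréchet property of a convergence ideal witnessed by choice functions `F`. -/
def UnifFrechet [BooleanAlgebra α] (I : Set (ℕ → α)) (F : ℕ → (ℕ → α) → α) : Prop :=
  ∀ x : ℕ → ℕ → α, (∀ k, x k ∈ I) → (fun k => F k (x k)) ∈ I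

theorem stmt9 [BooleanAlgebra α] (m : α → ℝ)
    (h0 : m ⊥ = 0) (h1 : m ⊤ = 1)
    (hmono : ∀ a b : α, a ≤ b → m a ≤ m b)
    (hsub : ∀ a b : α, m (a ⊔ b) ≤ m a + m b)
    (hpos : ∀ a : α, m a = 0 → a = ⊥)
    (hexh : ∀ a : ℕ → α, (∀ i j, i ≠ j → a i ⊓ a j = ⊥) →
      Tendsto (fun n => m (a n)) atTop (𝓝 0))
    (I : Set (ℕ → α))
    (hIdef : I = {a : ℕ → α | Tendsto (fun n => m (a n)) atTop (𝓝 0)}) :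
    IsConvIdeal I ∧
    ∃ F : ℕ → (ℕ → α) → α, IsSelective F ∧ UnifFrechet I F ∧
      ∀ k : ℕ, ∀ x ∈ I, m (F k x) < 1 / (k + 1 : ℝ) := by
  subst hIdef
  have hnn : ∀ a : α, 0 ≤ m a := fun a => h0 ▸ hmono ⊥ a bot_le
  constructor
  · refine ⟨?_, ?_, ?_, ?_, ?_⟩
    · intro a ha b hb
      apply hpos
      have h1 : Tendsto (fun _ : ℕ => m b) atTop (𝓝 0) :=
        squeeze_zero (fun _ => hnn b) (fun n => hmono _ _ (hb n)) ha
      exact tendsto_nhds_unique tendsto_const_nhds h1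
    · intro a ha φ hφ
      exact ha.comp hφ.tendsto_atTop
    · intro a ha b hb
      exact squeeze_zero (fun n => hnn _) (fun n => hmono _ _ (hb n)) ha
    · intro a ha b hb
      have : Tendsto (fun n => m (a n) + m (b n)) atTop (𝓝 (0 + 0)) := ha.add hb
      rw [add_zero] at this
      exact squeeze_zero (fun n => hnn _) (fun n => hsub _ _) this
    · intro a _ hdisj
      exact hexh a hdisj
  · classical
    refine ⟨fun k x => if h : ∃ n, m (x n) < 1 / (k + 1 : ℝ) then x h.choose else x 0,
      ?_, ?_, ?_⟩
    · intro k x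
      by_cases h : ∃ n, m (x n) < 1 / (k + 1 : ℝ)
      · exact ⟨h.choose, dif_pos h⟩
      · exact ⟨0, dif_neg h⟩
    · intro x hx
      have key : ∀ k, m ((fun k => if h : ∃ n, m (x k n) < 1 / (k + 1 : ℝ)
          then x k h.choose else x k 0) k) < 1 / (k + 1 : ℝ) := by
        intro k
        have hk : (0 : ℝ) < 1 / (k + 1 : ℝ) := by positivity
        have h : ∃ n, m (x k n) < 1 / (k + 1 : ℝ) := by
          have := (hx k).eventually (eventually_lt_nhds hk)
          exact this.exists
        simp only [dif_pos h]
        exact h.choose_spec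
      refine squeeze_zero (fun k => hnn _) (fun k => (key k).le) ?_
      exact tendsto_one_div_add_atTop_nhds_zero_nat
    · intro k x hx
      have hk : (0 : ℝ) < 1 / (k + 1 : ℝ) := by positivity
      have h : ∃ n, m (x n) < 1 / (k + 1 : ℝ) := ((hx.eventually (eventually_lt_nhds hk)).exists)
      simp only [dif_pos h]
      exact h.choose_spec
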